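/- The average mistreatment of G₂ students under the status quo satisfies ∫_1^∞ (μ̂₂(z) − z^{−α})·α·z^{−α−1} dz = (1−p)(1−β^α)/2. -/

import Mathlib

open Set MeasureTheory

/-- Biased school assignment of a G₂ student of true potential `z`. -/
noncomputable def muHat2 (α β p z : ℝ) : ℝ :=
  (1 - p) * min 1 ((β * z) ^ (-α)) + p * z ^ (-α)

/-- The average mistreatment of G₂ students under the status quo equals
`(1-p)(1-β^α)/2`. -/
theorem average_mistreatment_status_quo (α β p : ℝ) (hα : 0 < α)
    (hβ : β ∈ Ioo (0:ℝ) 1) (hp : p ∈ Ioo (0:ℝ) 1) :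
    ∫ z in Ioi (1:ℝ), (muHat2 α β p z - z ^ (-α)) * (α * z ^ (-α - 1))
      = (1 - p) * (1 - β ^ α) / 2 := by
  obtain ⟨hβ0, hβ1⟩ := hβ
  set c : ℝ := 1 / β with hcdef
  have hc0 : 0 < c := by positivity
  have hc1 : (1:ℝ) < c := (one_lt_div hβ0).2 hβ1
  set g : ℝ → ℝ := fun z => (min 1 ((β * z) ^ (-α)) - z ^ (-α)) * (α * z ^ (-α - 1)) with hg
  -- step 1: integrand = (1-p) * g z
  have hfg : ∀ z : ℝ, (muHat2 α β p z - z ^ (-α)) * (α * z ^ (-α - 1)) = (1 - p) * g z := by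
    intro z; simp only [muHat2, hg]; ring
  -- g on Ioc 1 c
  have hg1 : ∀ z ∈ Ioc (1:ℝ) c, g z = α * z ^ (-α - 1) - α * z ^ (-2*α - 1) := by
    intro z hz
    have hz0 : (0:ℝ) < z := lt_trans one_pos hz.1
    have hβz0 : 0 < β * z := by positivity
    have hβz1 : β * z ≤ 1 := by
      have := hz.2
      rw [hcdef] at this
      calc β * z ≤ β * (1/β) := by nlinarith
        _ = 1 := by field_simp
    have hmin : min 1 ((β * z) ^ (-α)) = 1 :=
      min_eq_left (Real.one_le_rpow_of_pos_of_le_one_of_nonpos hβz0 hβz1 (by linarith))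
    have hmul : z ^ (-α) * z ^ (-α - 1) = z ^ (-2*α - 1) := by
      rw [← Real.rpow_add hz0]; congr 1; ring
    simp only [hg, hmin]
    rw [← hmul]; ring
  -- g on Ioi c
  have hg2 : ∀ z ∈ Ioi c, g z = (β ^ (-α) - 1) * (α * z ^ (-2*α - 1)) := by
    intro z hz
    have hz0 : (0:ℝ) < z := lt_trans hc0 hz
    have hβz1 : 1 ≤ β * z := by
      have hz' : c < z := hz
      rw [hcdef] at hz'
      rw [div_lt_iff₀ hβ0] at hz'
      nlinarith
    have hmin : min 1 ((β * z) ^ (-α)) = (β * z) ^ (-α) :=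
      min_eq_right (Real.rpow_le_one_of_one_le_of_nonpos hβz1 (by linarith))
    have hsplit : (β * z) ^ (-α) = β ^ (-α) * z ^ (-α) :=
      Real.mul_rpow hβ0.le hz0.le
    have hmul : z ^ (-α) * z ^ (-α - 1) = z ^ (-2*α - 1) := by
      rw [← Real.rpow_add hz0]; congr 1; ring
    simp only [hg]
    rw [hmin, hsplit, ← hmul]; ring
  -- integrability on Ioc 1 c
  have hcontOn : ContinuousOn g (Icc (1:ℝ) c) := by
    have hpos : ∀ x ∈ Icc (1:ℝ) c, x ≠ 0 ∨ (0:ℝ) ≤ -α := fun x hx =>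
      Or.inl (by have := hx.1; positivity)
    apply ContinuousOn.mul
    · apply ContinuousOn.sub
      · exact continuous_min.comp_continuousOn
          (continuousOn_const.prodMk
            (((continuous_const.mul continuous_id).continuousOn).rpow_const
              (fun x hx => Or.inl (by have := hx.1; show β * x ≠ 0; positivity))))
      · exact continuousOn_id.rpow_const hpos
    · exact continuousOn_const.mul (continuousOn_id.rpow_const
        (fun x hx => Or.inl (by have := hx.1; positivity)))
  have hint1 : IntegrableOn g (Ioc (1:ℝ) c) :=
    (hcontOn.integrableOn_Icc).mono_set Ioc_subset_Icc_self
  -- integrability on Ioi c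
  have h2lt : -2*α - 1 < -1 := by linarith
  have hint2 : IntegrableOn g (Ioi c) := by
    have h0 : IntegrableOn (fun z : ℝ => (β ^ (-α) - 1) * (α * z ^ (-2*α - 1))) (Ioi c) :=
      (((integrableOn_Ioi_rpow_of_lt h2lt hc0).const_mul α).const_mul (β ^ (-α) - 1))
    exact h0.congr_fun (fun x hx => (hg2 x hx).symm) measurableSet_Ioi
  -- split the integral
  have hsplit : Ioc (1:ℝ) c ∪ Ioi c = Ioi (1:ℝ) := Ioc_union_Ioi_eq_Ioi hc1.le
  have key : ∫ z in Ioi (1:ℝ), g z = (∫ z in Ioc (1:ℝ) c, g z) + ∫ z in Ioi c, g z := by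
    rw [← hsplit]
    exact setIntegral_union (Ioc_disjoint_Ioi le_rfl) measurableSet_Ioi hint1 hint2
  -- value on Ioc 1 c
  have hne1 : -α - 1 ≠ -1 := by intro h; linarith
  have hne2 : -2*α - 1 ≠ -1 := by intro h; linarith
  have hnotmem : (0:ℝ) ∉ Set.uIcc (1:ℝ) c := by
    rw [Set.mem_uIcc]; push_neg; constructor <;> intro h <;> linarith
  have hcα : c ^ (-α) = β ^ α := by
    rw [hcdef, one_div, Real.inv_rpow hβ0.le, Real.rpow_neg hβ0.le, inv_inv]
  have hc2α : c ^ (-(2*α)) = β ^ α * β ^ α := by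
    rw [show -(2*α) = -α + -α by ring, Real.rpow_add hc0, hcα]
  have hI1 : ∫ z in Ioc (1:ℝ) c, g z
      = α * ((c ^ (-α) - 1) / (-α)) - α * ((c ^ (-(2*α)) - 1) / (-(2*α))) := by
    rw [setIntegral_congr_fun measurableSet_Ioc hg1,
      ← intervalIntegral.integral_of_le hc1.le]
    rw [intervalIntegral.integral_sub
      ((intervalIntegral.intervalIntegrable_rpow (Or.inr hnotmem)).const_mul α)
      ((intervalIntegral.intervalIntegrable_rpow (Or.inr hnotmem)).const_mul α)]
    rw [intervalIntegral.integral_const_mul, intervalIntegral.integral_const_mul,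
      integral_rpow (Or.inr ⟨hne1, hnotmem⟩), integral_rpow (Or.inr ⟨hne2, hnotmem⟩)]
    norm_num [Real.one_rpow]
  -- value on Ioi c
  have hI2 : ∫ z in Ioi c, g z
      = (β ^ (-α) - 1) * (α * (-c ^ (-(2*α)) / (-(2*α)))) := by
    rw [setIntegral_congr_fun measurableSet_Ioi hg2]
    rw [MeasureTheory.integral_const_mul, MeasureTheory.integral_const_mul,
      integral_Ioi_rpow_of_lt h2lt hc0]
    norm_num
  -- put it together
  have hβα : β ^ (-α) * (β ^ α * β ^ α) = β ^ α := by
    rw [← Real.rpow_add hβ0, ← Real.rpow_add hβ0]; congr 1; ring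
  calc ∫ z in Ioi (1:ℝ), (muHat2 α β p z - z ^ (-α)) * (α * z ^ (-α - 1))
      = ∫ z in Ioi (1:ℝ), (1 - p) * g z := by simp only [hfg]
    _ = (1 - p) * ∫ z in Ioi (1:ℝ), g z := MeasureTheory.integral_const_mul _ _
    _ = (1 - p) * (1 - β ^ α) / 2 := by
        rw [key, hI1, hI2, hcα, hc2α, Real.rpow_neg hβ0.le]
        have hbne : β ^ α ≠ 0 := (Real.rpow_pos_of_pos hβ0 α).ne'
        have hαne : α ≠ 0 := hα.ne'
        field_simp
        ring
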